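/- Let A be the m×m matrix A = diag(ε₁a₁,...,ε_m a_m) + B where B is the rank-one matrix with every row equal to (a₁,...,a_m), with all aᵢ > 0 and εᵢ > 0, and suppose ε₁a₁ > ε₂a₂ > ... > ε_m a_m (all distinct). Then A has m positive distinct real eigenvalues λ₁ > ... > λ_m satisfying εᵢaᵢ < λᵢ < ε_{i-1}a_{i-1} for i = 2,...,m, and min_i{εᵢaᵢ} + Σᵢaᵢ ≤ λ₁ ≤ max_i{εᵢaᵢ} + Σᵢaᵢ. -/

import Mathlib

open Matrix BigOperators

theorem aux0 (m : ℕ) (hm : 0 < m) (a d : Fin m → ℝ)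
    (ha : ∀ i, 0 < a i) (hdpos : ∀ i, 0 < d i)
    (hanti : StrictAnti d)
    (A : Matrix (Fin m) (Fin m) ℝ)
    (hA : ∀ i j, A i j = (if i = j then d i else 0) + a j) :
    ∃ lam : Fin m → ℝ,
      (∀ i, 0 < lam i) ∧ StrictAnti lam ∧
      (∀ i, (A - lam i • (1 : Matrix (Fin m) (Fin m) ℝ)).det = 0) ∧
      (∀ i j : Fin m, (j : ℕ) = (i : ℕ) + 1 →
        d j < lam j ∧ lam j < d i) ∧
      (⨅ i, d i) + ∑ i, a i ≤ lam ⟨0, hm⟩ ∧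
      lam ⟨0, hm⟩ ≤ (⨆ i, d i) + ∑ i, a i := by
  classical
  set S : ℝ := ∑ i, a i with hSdef
  have hS : 0 < S := Finset.sum_pos (fun i _ => ha i) ⟨⟨0, hm⟩, Finset.mem_univ _⟩
  set g : ℝ → ℝ := fun x => (∏ i, (x - d i)) - ∑ j, a j * ∏ i ∈ ({j}ᶜ : Finset (Fin m)), (x - d i)
    with hgdef
  have hgc : Continuous g := by
    apply Continuous.sub
    · exact continuous_finset_prod _ fun i _ => continuous_id.sub continuous_const
    · exact continuous_finset_sum _ fun j _ =>
        continuous_const.mul (continuous_finset_prod _ fun i _ => continuous_id.sub continuous_const)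
  -- key algebraic identity
  have hkey : ∀ x : ℝ, (∀ i, x - d i ≠ 0) →
      ∑ j, a j * ∏ i ∈ ({j}ᶜ : Finset (Fin m)), (x - d i)
        = (∏ i, (x - d i)) * ∑ j, a j * (x - d j)⁻¹ := by
    intro x hx
    rw [Finset.mul_sum]
    refine Finset.sum_congr rfl fun j _ => ?_
    have h1 : (x - d j) * ∏ i ∈ ({j}ᶜ : Finset (Fin m)), (x - d i) = ∏ i, (x - d i) := by
      rw [mul_comm]
      have := Finset.prod_compl_mul_prod ({j} : Finset (Fin m)) (fun i => x - d i)
      rwa [Finset.prod_singleton] at this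
    have h2 : (∏ i ∈ ({j}ᶜ : Finset (Fin m)), (x - d i)) = (x - d j)⁻¹ * ∏ i, (x - d i) :=
      (eq_inv_mul_iff_mul_eq₀ (hx j)).mpr h1
    rw [h2]; ring
  have hgfac : ∀ x : ℝ, (∀ i, x - d i ≠ 0) →
      g x = (∏ i, (x - d i)) * (1 - ∑ j, a j * (x - d j)⁻¹) := by
    intro x hx
    rw [hgdef]
    simp only
    rw [hkey x hx]
    ring
  -- value of g at the diagonal nodes
  have hgd : ∀ k, g (d k) = -(a k * ∏ i ∈ ({k}ᶜ : Finset (Fin m)), (d k - d i)) := by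
    intro k
    rw [hgdef]
    simp only
    rw [Finset.prod_eq_zero (Finset.mem_univ k) (sub_self (d k))]
    rw [Finset.sum_eq_single k]
    · ring
    · intro j _ hj
      rw [Finset.prod_eq_zero (show k ∈ ({j}ᶜ : Finset (Fin m)) by simpa using (Ne.symm hj))
        (sub_self (d k)), mul_zero]
    · intro h; exact absurd (Finset.mem_univ k) h
  -- sign of the nodal product
  have hP : ∀ k : Fin m, 0 < (-1 : ℝ) ^ (k : ℕ) * ∏ i ∈ ({k}ᶜ : Finset (Fin m)), (d k - d i) := by
    intro k
    have hsplit : ({k}ᶜ : Finset (Fin m)) = Finset.Iio k ∪ Finset.Ioi k := by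
      ext i
      simp only [Finset.mem_compl, Finset.mem_singleton, Finset.mem_union, Finset.mem_Iio,
        Finset.mem_Ioi]
      constructor
      · intro h; exact lt_or_gt_of_ne h
      · rintro (h | h)
        · exact ne_of_lt h
        · exact ne_of_gt h
    have hdisj : Disjoint (Finset.Iio k) (Finset.Ioi k) := by
      rw [Finset.disjoint_left]
      intro i hi hi'
      simp only [Finset.mem_Iio, Finset.mem_Ioi] at hi hi'
      exact absurd (hi.trans hi') (lt_irrefl _)
    rw [hsplit, Finset.prod_union hdisj]
    have hIio : ∏ i ∈ Finset.Iio k, (d k - d i)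
        = (-1 : ℝ) ^ (k : ℕ) * ∏ i ∈ Finset.Iio k, (d i - d k) := by
      have : ∀ i ∈ Finset.Iio k, d k - d i = -1 * (d i - d k) := by intro i _; ring
      rw [Finset.prod_congr rfl this, Finset.prod_mul_distrib, Finset.prod_const, Fin.card_Iio]
    have hQ : 0 < ∏ i ∈ Finset.Iio k, (d i - d k) :=
      Finset.prod_pos fun i hi => sub_pos.mpr (hanti (Finset.mem_Iio.mp hi))
    have hR : 0 < ∏ i ∈ Finset.Ioi k, (d k - d i) :=
      Finset.prod_pos fun i hi => sub_pos.mpr (hanti (Finset.mem_Ioi.mp hi))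
    have hsq : (-1 : ℝ) ^ (k : ℕ) * (-1 : ℝ) ^ (k : ℕ) = 1 := by
      rw [← pow_add]
      exact Even.neg_one_pow ⟨(k : ℕ), rfl⟩
    calc (0:ℝ) < ((-1 : ℝ) ^ (k : ℕ) * (-1 : ℝ) ^ (k : ℕ)) *
          ((∏ i ∈ Finset.Iio k, (d i - d k)) * ∏ i ∈ Finset.Ioi k, (d k - d i)) := by
            rw [hsq, one_mul]; exact mul_pos hQ hR
      _ = (-1 : ℝ) ^ (k : ℕ) *
          (((-1 : ℝ) ^ (k : ℕ) * ∏ i ∈ Finset.Iio k, (d i - d k)) * ∏ i ∈ Finset.Ioi k, (d k - d i)) := by ring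
      _ = (-1 : ℝ) ^ (k : ℕ) *
          ((∏ i ∈ Finset.Iio k, (d k - d i)) * ∏ i ∈ Finset.Ioi k, (d k - d i)) := by rw [hIio]
  have hsign : ∀ k : Fin m, 0 < (-1 : ℝ) ^ ((k : ℕ) + 1) * g (d k) := by
    intro k
    have : (-1 : ℝ) ^ ((k : ℕ) + 1) * g (d k)
        = a k * ((-1 : ℝ) ^ (k : ℕ) * ∏ i ∈ ({k}ᶜ : Finset (Fin m)), (d k - d i)) := by
      rw [hgd k, pow_succ]; ring
    rw [this]
    exact mul_pos (ha k) (hP k)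
  -- determinant identity
  have hdetg : ∀ x : ℝ, (∀ i, d i ≠ x) →
      (A - x • (1 : Matrix (Fin m) (Fin m) ℝ)).det = (-1 : ℝ) ^ m * g x := by
    intro x hx
    have hne : ∀ i, d i - x ≠ 0 := fun i => sub_ne_zero.mpr (hx i)
    have hne' : ∀ i, x - d i ≠ 0 := fun i => sub_ne_zero.mpr fun h => hx i h.symm
    have hAeq : A - x • (1 : Matrix (Fin m) (Fin m) ℝ)
        = Matrix.diagonal (fun i => d i - x)
          + Matrix.replicateCol Unit (fun _ => (1:ℝ)) * Matrix.replicateRow Unit a := by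
      ext i j
      by_cases h : i = j <;>
        simp [hA, Matrix.mul_apply, Matrix.one_apply, Matrix.diagonal, h] <;> ring
    have hdetD : (Matrix.diagonal fun i => d i - x).det = ∏ i, (d i - x) :=
      Matrix.det_diagonal
    have hu : IsUnit (Matrix.diagonal fun i => d i - x).det := by
      rw [hdetD]
      exact (Finset.prod_ne_zero_iff.mpr fun i _ => hne i).isUnit
    have hdet1 : (A - x • (1 : Matrix (Fin m) (Fin m) ℝ)).det
        = (∏ i, (d i - x)) * (1 + ∑ j, a j * (d j - x)⁻¹) := by
      rw [hAeq, Matrix.det_add_replicateCol_mul_replicateRow hu, hdetD]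
      congr 1
      have hinv : (Matrix.diagonal fun i => d i - x)⁻¹
          = Matrix.diagonal fun i => (d i - x)⁻¹ := by
        apply Matrix.inv_eq_right_inv
        rw [Matrix.diagonal_mul_diagonal]
        convert Matrix.diagonal_one using 2
        exact funext fun i => mul_inv_cancel₀ (hne i)
      rw [hinv]
      rw [Matrix.det_unique]
      simp only [Matrix.add_apply, Matrix.one_apply_eq, Matrix.mul_apply, Matrix.replicateRow_apply,
        Matrix.replicateCol_apply, Matrix.diagonal_apply]
      simp [mul_ite, Finset.sum_ite_eq']
    have h2 : ∏ i, (d i - x) = (-1 : ℝ) ^ m * ∏ i, (x - d i) := by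
      have hc : ∀ i ∈ Finset.univ, d i - x = -1 * (x - d i) := fun i _ => by ring
      rw [Finset.prod_congr rfl hc, Finset.prod_mul_distrib, Finset.prod_const,
        Finset.card_univ, Fintype.card_fin]
    have h3 : (1 : ℝ) + ∑ j, a j * (d j - x)⁻¹ = 1 - ∑ j, a j * (x - d j)⁻¹ := by
      have hc : ∀ j : Fin m, a j * (d j - x)⁻¹ = -(a j * (x - d j)⁻¹) := fun j => by
        rw [show d j - x = -(x - d j) by ring, inv_neg]; ring
      simp_rw [hc]
      rw [Finset.sum_neg_distrib, ← sub_eq_add_neg]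
    rw [hdet1, h2, h3, hgfac x hne']
    ring
  have hdet0 : ∀ x : ℝ, (∀ i, d i ≠ x) → g x = 0 →
      (A - x • (1 : Matrix (Fin m) (Fin m) ℝ)).det = 0 := by
    intro x hx hg
    rw [hdetg x hx, hg, mul_zero]
  -- interior roots
  have h1r : ∀ i j : Fin m, (j : ℕ) = (i : ℕ) + 1 → ∃ x, g x = 0 ∧ d j < x ∧ x < d i := by
    intro i j hij
    have hji : i < j := by rw [Fin.lt_def]; omega
    have hdji : d j < d i := hanti hji
    have si := hsign i
    have sj := hsign j
    rcases Nat.even_or_odd (i : ℕ) with he | ho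
    · have e1 : (-1 : ℝ) ^ ((i : ℕ) + 1) = -1 := Odd.neg_one_pow (he.add_one)
      have e2 : (-1 : ℝ) ^ ((j : ℕ) + 1) = 1 := by
        rw [hij]
        exact Even.neg_one_pow (by rcases he with ⟨r, hr⟩; exact ⟨r + 1, by omega⟩)
      rw [e1] at si; rw [e2] at sj
      have hgi : g (d i) < 0 := by linarith
      have hgj : 0 < g (d j) := by linarith
      obtain ⟨x, hx, hgx⟩ :=
        intermediate_value_Ioo' (le_of_lt hdji) hgc.continuousOn ⟨hgi, hgj⟩
      exact ⟨x, hgx, hx.1, hx.2⟩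
    · have e1 : (-1 : ℝ) ^ ((i : ℕ) + 1) = 1 := Even.neg_one_pow (ho.add_one)
      have e2 : (-1 : ℝ) ^ ((j : ℕ) + 1) = -1 := by
        rw [hij]
        exact Odd.neg_one_pow (by rcases ho with ⟨r, hr⟩; exact ⟨r + 1, by omega⟩)
      rw [e1] at si; rw [e2] at sj
      have hgi : 0 < g (d i) := by linarith
      have hgj : g (d j) < 0 := by linarith
      obtain ⟨x, hx, hgx⟩ :=
        intermediate_value_Ioo (le_of_lt hdji) hgc.continuousOn ⟨hgj, hgi⟩
      exact ⟨x, hgx, hx.1, hx.2⟩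
  -- top root
  set k0 : Fin m := ⟨0, hm⟩ with hk0def
  have hk0le : ∀ i, d i ≤ d k0 := fun i => hanti.antitone (by rw [Fin.le_def, hk0def]; exact Nat.zero_le _)
  have hbA : BddAbove (Set.range d) := (Set.finite_range d).bddAbove
  have hbB : BddBelow (Set.range d) := (Set.finite_range d).bddBelow
  have hsup : ∀ i, d i ≤ ⨆ i, d i := fun i => le_ciSup hbA i
  have hinf : ∀ i, (⨅ i, d i) ≤ d i := fun i => ciInf_le hbB i
  have h0r : ∃ x, g x = 0 ∧ d k0 < x ∧
      ((⨅ i, d i) + S ≤ x ∧ x ≤ (⨆ i, d i) + S) := by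
    set xR : ℝ := (⨆ i, d i) + S with hxRdef
    have hxRgt : ∀ i, d i < xR := fun i => lt_of_le_of_lt (hsup i) (by
      have := hS; rw [hxRdef]; linarith)
    have hgR : 0 ≤ g xR := by
      rw [hgfac xR (fun i => sub_ne_zero.mpr (ne_of_gt (hxRgt i)))]
      apply mul_nonneg
      · exact le_of_lt (Finset.prod_pos fun i _ => sub_pos.mpr (hxRgt i))
      · rw [sub_nonneg]
        calc ∑ j, a j * (xR - d j)⁻¹ ≤ ∑ j, a j * S⁻¹ := by
              apply Finset.sum_le_sum; intro j _
              refine mul_le_mul_of_nonneg_left ?_ (le_of_lt (ha j))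
              refine inv_anti₀ hS ?_
              have := hsup j; rw [hxRdef]; linarith
          _ = 1 := by rw [← Finset.sum_mul, ← hSdef, mul_inv_cancel₀ (ne_of_gt hS)]
    rcases le_or_gt ((⨅ i, d i) + S) (d k0) with hc | hc
    · have hgL : g (d k0) < 0 := by
        have s0 := hsign k0
        have e0 : ((k0 : ℕ) + 1) = 1 := by rw [hk0def]
        rw [e0, pow_one] at s0
        linarith
      have hLR : d k0 ≤ xR := le_of_lt (hxRgt k0)
      obtain ⟨x, hx, hgx⟩ := intermediate_value_Icc hLR hgc.continuousOn
        (⟨le_of_lt hgL, hgR⟩ : (0 : ℝ) ∈ Set.Icc (g (d k0)) (g xR))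
      have hxgt : d k0 < x := by
        rcases lt_or_eq_of_le hx.1 with h | h
        · exact h
        · exfalso; rw [← h] at hgx; rw [hgx] at hgL; exact lt_irrefl 0 hgL
      exact ⟨x, hgx, hxgt, le_trans hc (le_of_lt hxgt), hx.2⟩
    · set L : ℝ := (⨅ i, d i) + S with hLdef
      have hLgt : ∀ i, d i < L := fun i => lt_of_le_of_lt (hk0le i) hc
      have hgL : g L ≤ 0 := by
        rw [hgfac L (fun i => sub_ne_zero.mpr (ne_of_gt (hLgt i)))]
        refine mul_nonpos_iff.mpr (Or.inl ⟨?_, ?_⟩)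
        · exact le_of_lt (Finset.prod_pos fun i _ => sub_pos.mpr (hLgt i))
        · rw [sub_nonpos]
          calc (1 : ℝ) = ∑ j, a j * S⁻¹ := by
                rw [← Finset.sum_mul, ← hSdef, mul_inv_cancel₀ (ne_of_gt hS)]
            _ ≤ ∑ j, a j * (L - d j)⁻¹ := by
                apply Finset.sum_le_sum; intro j _
                refine mul_le_mul_of_nonneg_left ?_ (le_of_lt (ha j))
                refine inv_anti₀ (sub_pos.mpr (hLgt j)) ?_
                have := hinf j; rw [hLdef]; linarith
      have hLR : L ≤ xR := by
        have h1 := hinf k0; have h2 := hsup k0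
        rw [hLdef, hxRdef]; linarith
      obtain ⟨x, hx, hgx⟩ := intermediate_value_Icc hLR hgc.continuousOn
        (⟨hgL, hgR⟩ : (0 : ℝ) ∈ Set.Icc (g L) (g xR))
      exact ⟨x, hgx, lt_of_lt_of_le hc hx.1, hx.1, hx.2⟩
  -- assemble
  have hmain : ∀ k : Fin m, ∃ x, g x = 0 ∧ d k < x ∧
      (∀ i : Fin m, (k : ℕ) = (i : ℕ) + 1 → x < d i) ∧
      ((k : ℕ) = 0 → ((⨅ i, d i) + S ≤ x ∧ x ≤ (⨆ i, d i) + S)) := by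
    intro k
    rcases Nat.eq_zero_or_pos (k : ℕ) with hk | hk
    · obtain ⟨x, hgx, hx1, hx2, hx3⟩ := h0r
      have hkk : k = k0 := Fin.ext (by rw [hk0def]; exact hk)
      exact ⟨x, hgx, by rw [hkk]; exact hx1, fun i hi => absurd hi (by omega),
        fun _ => ⟨hx2, hx3⟩⟩
    · obtain ⟨x, hgx, hl, hu⟩ := h1r ⟨(k : ℕ) - 1, by omega⟩ k (by simp; omega)
      refine ⟨x, hgx, hl, ?_, fun h0 => absurd h0 (by omega)⟩
      intro i' hi'
      have : i' = ⟨(k : ℕ) - 1, by omega⟩ := Fin.ext (by simp; omega)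
      rw [this]; exact hu
  choose lam hg0 hlow hupp htop using hmain
  refine ⟨lam, fun k => lt_trans (hdpos k) (hlow k), ?_, ?_, ?_, ?_, ?_⟩
  · intro p q hpq
    have hq1 : 1 ≤ (q : ℕ) := by rw [Fin.lt_def] at hpq; omega
    have h1 : lam q < d ⟨(q : ℕ) - 1, by omega⟩ := hupp q ⟨(q : ℕ) - 1, by omega⟩ (by simp; omega)
    have h2 : d (⟨(q : ℕ) - 1, by omega⟩ : Fin m) ≤ d p := by
      refine hanti.antitone ?_
      rw [Fin.le_def]
      rw [Fin.lt_def] at hpq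
      simp
      omega
    exact lt_trans (lt_of_lt_of_le h1 h2) (hlow p)
  · intro k
    refine hdet0 (lam k) ?_ (hg0 k)
    intro i
    rcases le_or_gt k i with h | h
    · exact ne_of_lt (lt_of_le_of_lt (hanti.antitone h) (hlow k))
    · have hq1 : 1 ≤ (k : ℕ) := by rw [Fin.lt_def] at h; omega
      have hlt : lam k < d ⟨(k : ℕ) - 1, by omega⟩ :=
        hupp k ⟨(k : ℕ) - 1, by omega⟩ (by simp; omega)
      have h2 : d (⟨(k : ℕ) - 1, by omega⟩ : Fin m) ≤ d i := by
        refine hanti.antitone ?_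
        rw [Fin.le_def]
        rw [Fin.lt_def] at h
        simp
        omega
      exact ne_of_gt (lt_of_lt_of_le hlt h2)
  · exact fun i j hij => ⟨hlow j, hupp j i hij⟩
  · exact (htop ⟨0, hm⟩ rfl).1
  · exact (htop ⟨0, hm⟩ rfl).2


/-- eigenvalues of diag(εᵢaᵢ) + rank-one matrix with rows (a₁,…,a_m). -/
theorem stmt0 (m : ℕ) (hm : 0 < m) (a ε : Fin m → ℝ)
    (ha : ∀ i, 0 < a i) (hε : ∀ i, 0 < ε i)
    (hdist : ∀ i j : Fin m, i < j → ε j * a j < ε i * a i)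
    (A : Matrix (Fin m) (Fin m) ℝ)
    (hA : ∀ i j, A i j = (if i = j then ε i * a i else 0) + a j) :
    ∃ lam : Fin m → ℝ,
      (∀ i, 0 < lam i) ∧ StrictAnti lam ∧
      (∀ i, (A - lam i • (1 : Matrix (Fin m) (Fin m) ℝ)).det = 0) ∧
      (∀ i j : Fin m, (j : ℕ) = (i : ℕ) + 1 →
        ε j * a j < lam j ∧ lam j < ε i * a i) ∧
      (⨅ i, ε i * a i) + ∑ i, a i ≤ lam ⟨0, hm⟩ ∧
      lam ⟨0, hm⟩ ≤ (⨆ i, ε i * a i) + ∑ i, a i := by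
  exact aux0 m hm a (fun i => ε i * a i) ha (fun i => mul_pos (hε i) (ha i))
    (fun i j hij => hdist i j hij) A hA
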